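/- For the extended Calogero Hamiltonian H = ½p_u² + mA(L) + mL₀A²u² with L = ½(p₁²+p₂²+p₃²) + mL₀[(x₁+x⁰₁)²+(x₂+x⁰₂)²+(x₃+x⁰₃)²] + k Σ_{i<j}(xᵢ-xⱼ)⁻², the quantity U²G = G p_u² - 2Au p_u P - 4A²L₀ G u², where G = x⁰₁+x⁰₂+x⁰₃+x₁+x₂+x₃ and P = p₁+p₂+p₃, Poisson-commutes with H. -/

import Mathlib

open scoped BigOperators

/-- Canonical Poisson bracket on `T*ℝ⁴` with coordinates
`q = (u,x₁,x₂,x₃)` and momenta `p = (p_u,p₁,p₂,p₃)`. -/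
noncomputable def pb4 (f g : (Fin 4 → ℝ) → (Fin 4 → ℝ) → ℝ)
    (q p : Fin 4 → ℝ) : ℝ :=
  ∑ i : Fin 4,
    (fderiv ℝ (fun q' => f q' p) q (Pi.single i 1) *
        fderiv ℝ (fun p' => g q p') p (Pi.single i 1)
      - fderiv ℝ (fun p' => f q p') p (Pi.single i 1) *
        fderiv ℝ (fun q' => g q' p) q (Pi.single i 1))

private lemma hfd_inv {c : (Fin 4 → ℝ) → ℝ} {c' : (Fin 4 → ℝ) →L[ℝ] ℝ} {x : Fin 4 → ℝ}
    (hc : HasFDerivAt c c' x) (h : c x ≠ 0) :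
    HasFDerivAt (fun y => (c y)⁻¹) ((-(c x ^ 2)⁻¹) • c') x :=
  (hasDerivAt_inv h).comp_hasFDerivAt x hc

private lemma hfd_sq {c : (Fin 4 → ℝ) → ℝ} {c' : (Fin 4 → ℝ) →L[ℝ] ℝ} {x : Fin 4 → ℝ}
    (hc : HasFDerivAt c c' x) :
    HasFDerivAt (fun y => (c y) ^ 2) ((2 * c x) • c') x := by
  simpa [Function.comp_def] using (hasDerivAt_pow 2 (c x)).comp_hasFDerivAt x hc

/-- For the extended three-body Calogero Hamiltonian with `m = 2`,
`H = ½p_u² + 2A·L + 2L₀A²u²`, the quadratic quantity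
`U²G = G p_u² - 2Au p_u P - 4A²L₀ G u²` Poisson-commutes with `H` on the region
where the `xᵢ` are pairwise distinct. -/
theorem calogero_extension_m2 (A L₀ k x01 x02 x03 : ℝ) (hA : A ≠ 0)
    (L H F : (Fin 4 → ℝ) → (Fin 4 → ℝ) → ℝ)
    (hL : ∀ q p, L q p =
      (1 / 2) * ((p 1) ^ 2 + (p 2) ^ 2 + (p 3) ^ 2)
        + 2 * L₀ * ((q 1 + x01) ^ 2 + (q 2 + x02) ^ 2 + (q 3 + x03) ^ 2)
        + k * ((q 1 - q 2)⁻¹ ^ 2 + (q 1 - q 3)⁻¹ ^ 2 + (q 2 - q 3)⁻¹ ^ 2))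
    (hH : ∀ q p, H q p =
      (1 / 2) * (p 0) ^ 2 + 2 * A * L q p + 2 * L₀ * A ^ 2 * (q 0) ^ 2)
    (hF : ∀ q p, F q p =
      (x01 + x02 + x03 + q 1 + q 2 + q 3) * (p 0) ^ 2
        - 2 * A * q 0 * p 0 * (p 1 + p 2 + p 3)
        - 4 * A ^ 2 * L₀ * (x01 + x02 + x03 + q 1 + q 2 + q 3) * (q 0) ^ 2) :
    ∀ q p : Fin 4 → ℝ, q 1 ≠ q 2 → q 1 ≠ q 3 → q 2 ≠ q 3 →
      pb4 H F q p = 0 := by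
  have hLf : L = fun q p =>
      (1 / 2) * ((p 1) ^ 2 + (p 2) ^ 2 + (p 3) ^ 2)
        + 2 * L₀ * ((q 1 + x01) ^ 2 + (q 2 + x02) ^ 2 + (q 3 + x03) ^ 2)
        + k * ((q 1 - q 2)⁻¹ ^ 2 + (q 1 - q 3)⁻¹ ^ 2 + (q 2 - q 3)⁻¹ ^ 2) :=
    funext fun q => funext fun p => hL q p
  subst hLf
  have hHf : H = fun q p =>
      (1 / 2) * (p 0) ^ 2 + 2 * A *
        ((1 / 2) * ((p 1) ^ 2 + (p 2) ^ 2 + (p 3) ^ 2)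
        + 2 * L₀ * ((q 1 + x01) ^ 2 + (q 2 + x02) ^ 2 + (q 3 + x03) ^ 2)
        + k * ((q 1 - q 2)⁻¹ ^ 2 + (q 1 - q 3)⁻¹ ^ 2 + (q 2 - q 3)⁻¹ ^ 2))
        + 2 * L₀ * A ^ 2 * (q 0) ^ 2 :=
    funext fun q => funext fun p => hH q p
  subst hHf
  have hFf : F = fun q p =>
      (x01 + x02 + x03 + q 1 + q 2 + q 3) * (p 0) ^ 2
        - 2 * A * q 0 * p 0 * (p 1 + p 2 + p 3)
        - 4 * A ^ 2 * L₀ * (x01 + x02 + x03 + q 1 + q 2 + q 3) * (q 0) ^ 2 :=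
    funext fun q => funext fun p => hF q p
  subst hFf
  intro q p h12 h13 h23
  have e12 : q 1 - q 2 ≠ 0 := sub_ne_zero.2 h12
  have e13 : q 1 - q 3 ≠ 0 := sub_ne_zero.2 h13
  have e23 : q 2 - q 3 ≠ 0 := sub_ne_zero.2 h23
  have pdq : ∀ i : Fin 4, HasFDerivAt (fun q' : Fin 4 → ℝ => q' i)
      (ContinuousLinearMap.proj (R := ℝ) (φ := fun _ : Fin 4 => ℝ) i) q := fun i =>
    hasFDerivAt_apply (𝕜 := ℝ) i q
  have pdp : ∀ i : Fin 4, HasFDerivAt (fun p' : Fin 4 → ℝ => p' i)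
      (ContinuousLinearMap.proj (R := ℝ) (φ := fun _ : Fin 4 => ℝ) i) p := fun i =>
    hasFDerivAt_apply (𝕜 := ℝ) i p
  -- derivative of H in q
  have DHq := ((HasFDerivAt.const_mul
      ((((((hfd_sq ((pdq 1).add_const x01)).add (hfd_sq ((pdq 2).add_const x02))).add
          (hfd_sq ((pdq 3).add_const x03))).const_mul (2 * L₀)).const_add
          ((1 : ℝ) / 2 * ((p 1) ^ 2 + (p 2) ^ 2 + (p 3) ^ 2))).add
        ((((hfd_sq (hfd_inv ((pdq 1).sub (pdq 2)) e12)).add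
            (hfd_sq (hfd_inv ((pdq 1).sub (pdq 3)) e13))).add
            (hfd_sq (hfd_inv ((pdq 2).sub (pdq 3)) e23))).const_mul k))
      (2 * A)).const_add ((1 : ℝ) / 2 * (p 0) ^ 2)).add
    ((hfd_sq (pdq 0)).const_mul (2 * L₀ * A ^ 2))
  have EHq : fderiv ℝ (fun q' : Fin 4 → ℝ =>
      (1 / 2) * (p 0) ^ 2 + 2 * A *
        ((1 / 2) * ((p 1) ^ 2 + (p 2) ^ 2 + (p 3) ^ 2)
        + 2 * L₀ * ((q' 1 + x01) ^ 2 + (q' 2 + x02) ^ 2 + (q' 3 + x03) ^ 2)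
        + k * ((q' 1 - q' 2)⁻¹ ^ 2 + (q' 1 - q' 3)⁻¹ ^ 2 + (q' 2 - q' 3)⁻¹ ^ 2))
        + 2 * L₀ * A ^ 2 * (q' 0) ^ 2) q = _ := DHq.fderiv
  -- derivative of H in p
  have DHp := (((hfd_sq (pdp 0)).const_mul ((1 : ℝ) / 2)).add
    (HasFDerivAt.const_mul
      ((((((hfd_sq (pdp 1)).add (hfd_sq (pdp 2))).add (hfd_sq (pdp 3))).const_mul
          ((1 : ℝ) / 2)).add_const
        (2 * L₀ * ((q 1 + x01) ^ 2 + (q 2 + x02) ^ 2 + (q 3 + x03) ^ 2))).add_const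
        (k * ((q 1 - q 2)⁻¹ ^ 2 + (q 1 - q 3)⁻¹ ^ 2 + (q 2 - q 3)⁻¹ ^ 2)))
      (2 * A))).add_const (2 * L₀ * A ^ 2 * (q 0) ^ 2)
  have EHp : fderiv ℝ (fun p' : Fin 4 → ℝ =>
      (1 / 2) * (p' 0) ^ 2 + 2 * A *
        ((1 / 2) * ((p' 1) ^ 2 + (p' 2) ^ 2 + (p' 3) ^ 2)
        + 2 * L₀ * ((q 1 + x01) ^ 2 + (q 2 + x02) ^ 2 + (q 3 + x03) ^ 2)
        + k * ((q 1 - q 2)⁻¹ ^ 2 + (q 1 - q 3)⁻¹ ^ 2 + (q 2 - q 3)⁻¹ ^ 2))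
        + 2 * L₀ * A ^ 2 * (q 0) ^ 2) p = _ := DHp.fderiv
  -- derivative of F in q
  have Gq := (((pdq 1).const_add (x01 + x02 + x03)).add (pdq 2)).add (pdq 3)
  have DFq := ((Gq.mul_const ((p 0) ^ 2)).sub
      ((((pdq 0).const_mul (2 * A)).mul_const (p 0)).mul_const (p 1 + p 2 + p 3))).sub
    ((Gq.const_mul (4 * A ^ 2 * L₀)).mul (hfd_sq (pdq 0)))
  have EFq : fderiv ℝ (fun q' : Fin 4 → ℝ =>
      (x01 + x02 + x03 + q' 1 + q' 2 + q' 3) * (p 0) ^ 2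
        - 2 * A * q' 0 * p 0 * (p 1 + p 2 + p 3)
        - 4 * A ^ 2 * L₀ * (x01 + x02 + x03 + q' 1 + q' 2 + q' 3) * (q' 0) ^ 2) q = _ :=
    DFq.fderiv
  -- derivative of F in p
  have DFp := (((hfd_sq (pdp 0)).const_mul (x01 + x02 + x03 + q 1 + q 2 + q 3)).sub
    (((pdp 0).const_mul (2 * A * q 0)).mul (((pdp 1).add (pdp 2)).add (pdp 3)))).sub_const
    (4 * A ^ 2 * L₀ * (x01 + x02 + x03 + q 1 + q 2 + q 3) * (q 0) ^ 2)
  have EFp : fderiv ℝ (fun p' : Fin 4 → ℝ =>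
      (x01 + x02 + x03 + q 1 + q 2 + q 3) * (p' 0) ^ 2
        - 2 * A * q 0 * p' 0 * (p' 1 + p' 2 + p' 3)
        - 4 * A ^ 2 * L₀ * (x01 + x02 + x03 + q 1 + q 2 + q 3) * (q 0) ^ 2) p = _ :=
    DFp.fderiv
  simp only [pb4, Fin.sum_univ_four, EHq, EHp, EFq, EFp]
  simp [Pi.single_apply]
  ring
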